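/- Let M be an MDP, s a state, T₁,…,T_m ⊆ S absorbing target sets, and q₁,…,q_{m+1} rational coefficients. Then for ▷ ∈ {≥, >}: there exists a scheduler σ ∈ HR with Σ_{i=1}^m qᵢ · Pr^σ_s(◇Tᵢ) ▷ q_{m+1} if and only if there exists a memoryless deterministic scheduler σ with the same property; likewise, for every ε ≥ 0, there exists σ ∈ HR with |Σ_{i=1}^m qᵢ · Pr^σ_s(◇Tᵢ) − q_{m+1}| > ε if and only if there exists a memoryless deterministic such scheduler. That is, MD schedulers suffice for a single scheduler quantifier and a single initial state when all target sets are absorbing and the comparison is an inequality or disequality. -/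

import Mathlib

open scoped BigOperators Classical
open Filter

/-- A finite history: an initial state together with a list of (action, next-state) steps. -/
abbrev Hist (S A : Type*) : Type _ := S × List (A × S)

/-- The last state of a history. -/
def Hist.last {S A : Type*} (π : Hist S A) : S :=
  (π.2.getLast?).elim π.1 Prod.snd

/-- A Markov decision process with finite state space `S` and finite action space `A`:
`P s a s'` is the transition probability, each state has at least one enabled action
(an action whose outgoing probabilities sum to `1`), and the outgoing probabilities
of a non-enabled action sum to `0`. -/
structure MDP (S A : Type*) [Fintype S] [Fintype A] where
  P : S → A → S → ℝ
  nonneg : ∀ s a s', 0 ≤ P s a s'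
  le_one : ∀ s a s', P s a s' ≤ 1
  sum_cases : ∀ s a, (∑ s', P s a s') = 1 ∨ (∑ s', P s a s') = 0
  exists_enabled : ∀ s, ∃ a, (∑ s', P s a s') = 1

namespace MDP

variable {S A : Type*} [Fintype S] [Fintype A]

/-- Action `a` is enabled in state `s`. -/
def enabled (M : MDP S A) (s : S) (a : A) : Prop := (∑ s', M.P s a s') = 1

/-- A state is absorbing if every enabled action loops on it with probability 1. -/
def Absorbing (M : MDP S A) (s : S) : Prop := ∀ a, M.enabled s a → M.P s a s = 1

end MDP

/-- A (history-dependent, randomized) scheduler for `M`: it assigns to every finite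
history a probability distribution over the actions enabled at its last state. -/
structure Scheduler {S A : Type*} [Fintype S] [Fintype A] (M : MDP S A) where
  choice : Hist S A → A → ℝ
  nonneg : ∀ π a, 0 ≤ choice π a
  sum_one : ∀ π, (∑ a, choice π a) = 1
  supp : ∀ π a, ¬ M.enabled (Hist.last π) a → choice π a = 0

namespace Scheduler

variable {S A : Type*} [Fintype S] [Fintype A] {M : MDP S A}

/-- A scheduler is memoryless if its choice only depends on the last state of the history. -/
def Memoryless (σ : Scheduler M) : Prop :=
  ∀ π π' : Hist S A, Hist.last π = Hist.last π' → σ.choice π = σ.choice π'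

/-- A scheduler is deterministic if all its choice probabilities are 0 or 1. -/
def Deterministic (σ : Scheduler M) : Prop :=
  ∀ π a, σ.choice π a = 0 ∨ σ.choice π a = 1

/-- Memoryless deterministic (MD) schedulers. -/
def MD (σ : Scheduler M) : Prop := σ.Memoryless ∧ σ.Deterministic

end Scheduler

/-- Probability of reaching the target set `T` within `n` steps, starting from history `π`,
under scheduler `σ`. -/
noncomputable def reachN {S A : Type*} [Fintype S] [Fintype A] (M : MDP S A)
    (σ : Scheduler M) (T : Set S) : ℕ → Hist S A → ℝ
  | 0, π => if Hist.last π ∈ T then 1 else 0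
  | n + 1, π =>
      if Hist.last π ∈ T then 1
      else ∑ a, σ.choice π a * ∑ s', M.P (Hist.last π) a s' *
        reachN M σ T n (π.1, π.2 ++ [(a, s')])

/-- `Pr M σ s T` is the probability of eventually reaching `T` from state `s` under
scheduler `σ`: the supremum of the step-bounded reachability probabilities. -/
noncomputable def Pr {S A : Type*} [Fintype S] [Fintype A] (M : MDP S A)
    (σ : Scheduler M) (s : S) (T : Set S) : ℝ :=
  ⨆ n : ℕ, reachN M σ T n (s, [])
set_option linter.unusedSectionVars false
set_option maxHeartbeats 1000000
open scoped NNReal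

section Aux

variable {S A : Type*} [Fintype S] [Fintype A]

lemma last_ext (π : Hist S A) (a : A) (s' : S) :
    Hist.last ((π.1, π.2 ++ [(a, s')]) : Hist S A) = s' := by
  simp [Hist.last]

lemma last_nil (s : S) : Hist.last ((s, []) : Hist S A) = s := rfl

lemma MDP.sum_le_one (M : MDP S A) (t : S) (a : A) : (∑ s', M.P t a s') ≤ 1 := by
  rcases M.sum_cases t a with h | h <;> simp [h]

lemma MDP.P_eq_zero_of_not_enabled (M : MDP S A) {t : S} {a : A}
    (h : ¬ M.enabled t a) (s' : S) : M.P t a s' = 0 := by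
  rcases M.sum_cases t a with h1 | h0
  · exact absurd h1 h
  · have := (Finset.sum_eq_zero_iff_of_nonneg
      (fun x _ => M.nonneg t a x)).mp h0
    exact this s' (Finset.mem_univ s')

lemma MDP.P_absorbing_ne (M : MDP S A) {t : S} (h : M.Absorbing t) {a : A}
    (ha : M.enabled t a) {s' : S} (hne : s' ≠ t) : M.P t a s' = 0 := by
  have h1 : M.P t a t = 1 := h a ha
  have hsum : (∑ s', M.P t a s') = 1 := ha
  have h2 : ∑ s' ∈ Finset.univ.erase t, M.P t a s' = 0 := by
    have h3 := Finset.add_sum_erase Finset.univ (M.P t a) (Finset.mem_univ t)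
    rw [hsum, h1] at h3
    linarith
  have := (Finset.sum_eq_zero_iff_of_nonneg
      (fun x _ => M.nonneg t a x)).mp h2
  exact this s' (Finset.mem_erase.mpr ⟨hne, Finset.mem_univ s'⟩)

/-- Discounted step-bounded reachability. -/
noncomputable def reachD (M : MDP S A) (σ : Scheduler M) (T : Set S) (β : ℝ) :
    ℕ → Hist S A → ℝ
  | 0, π => if Hist.last π ∈ T then 1 else 0
  | n + 1, π =>
      if Hist.last π ∈ T then 1
      else β * ∑ a, σ.choice π a * ∑ s', M.P (Hist.last π) a s' *
        reachD M σ T β n (π.1, π.2 ++ [(a, s')])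

variable {M : MDP S A}

lemma avg_le_one (σ : Scheduler M) (π : Hist S A) (x : A → ℝ)
    (hx1 : ∀ a, x a ≤ 1) (hx0 : ∀ a, 0 ≤ x a) :
    (∑ a, σ.choice π a * x a) ≤ 1 := by
  calc (∑ a, σ.choice π a * x a) ≤ ∑ a, σ.choice π a * 1 :=
        Finset.sum_le_sum fun a _ => mul_le_mul_of_nonneg_left (hx1 a) (σ.nonneg π a)
    _ = 1 := by simp [σ.sum_one π]

lemma inner_le_one (t : S) (x : S → ℝ) (hx1 : ∀ s', x s' ≤ 1) (hx0 : ∀ s', 0 ≤ x s') (a : A) :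
    (∑ s', M.P t a s' * x s') ≤ 1 := by
  calc (∑ s', M.P t a s' * x s') ≤ ∑ s', M.P t a s' * 1 :=
        Finset.sum_le_sum fun s' _ => mul_le_mul_of_nonneg_left (hx1 s') (M.nonneg t a s')
    _ ≤ 1 := by simpa using M.sum_le_one t a

lemma reachN_nonneg (σ : Scheduler M) (T : Set S) :
    ∀ n π, 0 ≤ reachN M σ T n π := by
  intro n
  induction n with
  | zero => intro π; rw [reachN]; positivity
  | succ n ih =>
    intro π; rw [reachN]
    split
    · norm_num
    · refine Finset.sum_nonneg fun a _ => mul_nonneg (σ.nonneg _ _) ?_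
      exact Finset.sum_nonneg fun s' _ => mul_nonneg (M.nonneg _ _ _) (ih _)

lemma reachN_le_one (σ : Scheduler M) (T : Set S) :
    ∀ n π, reachN M σ T n π ≤ 1 := by
  intro n
  induction n with
  | zero => intro π; rw [reachN]; split <;> norm_num
  | succ n ih =>
    intro π; rw [reachN]
    split
    · exact le_refl 1
    · exact avg_le_one σ π _
        (fun a => inner_le_one _ _ (fun s' => ih _) (fun s' => reachN_nonneg σ T n _) a)
        (fun a => Finset.sum_nonneg fun s' _ => mul_nonneg (M.nonneg _ _ _) (reachN_nonneg σ T n _))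

lemma reachN_mono (σ : Scheduler M) (T : Set S) :
    ∀ n π, reachN M σ T n π ≤ reachN M σ T (n+1) π := by
  intro n
  induction n with
  | zero =>
    intro π
    rw [reachN, reachN]
    split
    · exact le_refl 1
    · refine Finset.sum_nonneg fun a _ => mul_nonneg (σ.nonneg _ _) ?_
      exact Finset.sum_nonneg fun s' _ => mul_nonneg (M.nonneg _ _ _) (reachN_nonneg σ T 0 _)
  | succ n ih =>
    intro π
    simp only [reachN]
    split
    · exact le_refl 1
    · refine Finset.sum_le_sum fun a _ => mul_le_mul_of_nonneg_left ?_ (σ.nonneg _ _)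
      exact Finset.sum_le_sum fun s' _ => mul_le_mul_of_nonneg_left (ih _) (M.nonneg _ _ _)

lemma reachN_mono_le (σ : Scheduler M) (T : Set S) {n m : ℕ} (h : n ≤ m) (π : Hist S A) :
    reachN M σ T n π ≤ reachN M σ T m π := by
  induction m with
  | zero => simp [Nat.le_zero.mp h]
  | succ m ih =>
    rcases Nat.le_succ_iff.mp h with h' | h'
    · exact le_trans (ih h') (reachN_mono σ T m π)
    · simp [h']

section reachD

variable {β : ℝ}

lemma reachD_nonneg (hβ0 : 0 ≤ β) (σ : Scheduler M) (T : Set S) :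
    ∀ n π, 0 ≤ reachD M σ T β n π := by
  intro n
  induction n with
  | zero => intro π; rw [reachD]; positivity
  | succ n ih =>
    intro π; rw [reachD]
    split
    · norm_num
    · refine mul_nonneg hβ0 (Finset.sum_nonneg fun a _ => mul_nonneg (σ.nonneg _ _) ?_)
      exact Finset.sum_nonneg fun s' _ => mul_nonneg (M.nonneg _ _ _) (ih _)

lemma reachD_le_reachN (hβ0 : 0 ≤ β) (hβ1 : β ≤ 1) (σ : Scheduler M) (T : Set S) :
    ∀ n π, reachD M σ T β n π ≤ reachN M σ T n π := by
  intro n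
  induction n with
  | zero => intro π; rw [reachD, reachN]
  | succ n ih =>
    intro π; rw [reachD, reachN]
    split
    · exact le_refl 1
    · calc β * ∑ a, σ.choice π a * ∑ s', M.P (Hist.last π) a s' *
            reachD M σ T β n (π.1, π.2 ++ [(a, s')])
          ≤ 1 * ∑ a, σ.choice π a * ∑ s', M.P (Hist.last π) a s' *
            reachN M σ T n (π.1, π.2 ++ [(a, s')]) := by
            refine mul_le_mul hβ1 ?_ ?_ zero_le_one
            · refine Finset.sum_le_sum fun a _ => mul_le_mul_of_nonneg_left ?_ (σ.nonneg _ _)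
              exact Finset.sum_le_sum fun s' _ => mul_le_mul_of_nonneg_left (ih _) (M.nonneg _ _ _)
            · refine Finset.sum_nonneg fun a _ => mul_nonneg (σ.nonneg _ _) ?_
              exact Finset.sum_nonneg fun s' _ => mul_nonneg (M.nonneg _ _ _)
                (reachD_nonneg hβ0 σ T n _)
      _ = _ := one_mul _

lemma reachD_le_one (hβ0 : 0 ≤ β) (hβ1 : β ≤ 1) (σ : Scheduler M) (T : Set S)
    (n : ℕ) (π : Hist S A) : reachD M σ T β n π ≤ 1 :=
  le_trans (reachD_le_reachN hβ0 hβ1 σ T n π) (reachN_le_one σ T n π)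

lemma reachD_mono (hβ0 : 0 ≤ β) (σ : Scheduler M) (T : Set S) :
    ∀ n π, reachD M σ T β n π ≤ reachD M σ T β (n+1) π := by
  intro n
  induction n with
  | zero =>
    intro π
    simp only [reachD]
    split
    · exact le_refl 1
    · refine mul_nonneg hβ0 (Finset.sum_nonneg fun a _ => mul_nonneg (σ.nonneg _ _) ?_)
      exact Finset.sum_nonneg fun s' _ => mul_nonneg (M.nonneg _ _ _) (reachD_nonneg hβ0 σ T 0 _)
  | succ n ih =>
    intro π
    simp only [reachD]
    split
    · exact le_refl 1
    · refine mul_le_mul_of_nonneg_left ?_ hβ0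
      refine Finset.sum_le_sum fun a _ => mul_le_mul_of_nonneg_left ?_ (σ.nonneg _ _)
      exact Finset.sum_le_sum fun s' _ => mul_le_mul_of_nonneg_left (ih _) (M.nonneg _ _ _)

lemma reachD_mono_le (hβ0 : 0 ≤ β) (σ : Scheduler M) (T : Set S) {n m : ℕ} (h : n ≤ m)
    (π : Hist S A) : reachD M σ T β n π ≤ reachD M σ T β m π := by
  induction m with
  | zero => simp [Nat.le_zero.mp h]
  | succ m ih =>
    rcases Nat.le_succ_iff.mp h with h' | h'
    · exact le_trans (ih h') (reachD_mono hβ0 σ T m π)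
    · simp [h']

lemma pow_reachN_le_reachD (hβ0 : 0 ≤ β) (hβ1 : β ≤ 1) (σ : Scheduler M) (T : Set S) :
    ∀ n π, β ^ n * reachN M σ T n π ≤ reachD M σ T β n π := by
  intro n
  induction n with
  | zero => intro π; rw [reachD, reachN]; simp
  | succ n ih =>
    intro π
    rw [reachD, reachN]
    split
    · calc β ^ (n+1) * 1 ≤ 1 := by
            rw [mul_one]; exact pow_le_one₀ hβ0 hβ1
        _ = 1 := rfl
    · rw [pow_succ, mul_comm (β ^ n) β, mul_assoc]
      refine mul_le_mul_of_nonneg_left ?_ hβ0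
      rw [Finset.mul_sum]
      refine Finset.sum_le_sum fun a _ => ?_
      rw [← mul_assoc, mul_comm (β ^ n) (σ.choice π a), mul_assoc]
      refine mul_le_mul_of_nonneg_left ?_ (σ.nonneg _ _)
      rw [Finset.mul_sum]
      refine Finset.sum_le_sum fun s' _ => ?_
      rw [← mul_assoc, mul_comm (β ^ n) (M.P _ _ _), mul_assoc]
      exact mul_le_mul_of_nonneg_left (ih _) (M.nonneg _ _ _)

end reachD

/-- Discounted reachability value. -/
noncomputable def PrD (M : MDP S A) (σ : Scheduler M) (s : S) (T : Set S) (β : ℝ) : ℝ :=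
  ⨆ n : ℕ, reachD M σ T β n (s, [])

lemma bddAbove_reachN (σ : Scheduler M) (s : S) (T : Set S) :
    BddAbove (Set.range fun n => reachN M σ T n ((s, []) : Hist S A)) :=
  ⟨1, by rintro _ ⟨n, rfl⟩; exact reachN_le_one σ T n _⟩

lemma bddAbove_reachD {β : ℝ} (hβ0 : 0 ≤ β) (hβ1 : β ≤ 1) (σ : Scheduler M) (s : S) (T : Set S) :
    BddAbove (Set.range fun n => reachD M σ T β n ((s, []) : Hist S A)) :=
  ⟨1, by rintro _ ⟨n, rfl⟩; exact reachD_le_one hβ0 hβ1 σ T n _⟩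

lemma reachN_le_Pr (σ : Scheduler M) (s : S) (T : Set S) (n : ℕ) :
    reachN M σ T n (s, []) ≤ Pr M σ s T :=
  le_ciSup (bddAbove_reachN σ s T) n

lemma reachD_le_PrD {β : ℝ} (hβ0 : 0 ≤ β) (hβ1 : β ≤ 1) (σ : Scheduler M) (s : S) (T : Set S)
    (n : ℕ) : reachD M σ T β n (s, []) ≤ PrD M σ s T β :=
  le_ciSup (bddAbove_reachD hβ0 hβ1 σ s T) n

lemma PrD_le_Pr {β : ℝ} (hβ0 : 0 ≤ β) (hβ1 : β ≤ 1) (σ : Scheduler M) (s : S) (T : Set S) :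
    PrD M σ s T β ≤ Pr M σ s T :=
  ciSup_le fun n => le_trans (reachD_le_reachN hβ0 hβ1 σ T n _) (reachN_le_Pr σ s T n)

lemma Pr_nonneg (σ : Scheduler M) (s : S) (T : Set S) : 0 ≤ Pr M σ s T :=
  le_trans (reachN_nonneg σ T 0 _) (reachN_le_Pr σ s T 0)

lemma Pr_le_one (σ : Scheduler M) (s : S) (T : Set S) : Pr M σ s T ≤ 1 :=
  ciSup_le fun n => reachN_le_one σ T n _

lemma Pr_sub_PrD_le (σ : Scheduler M) (s : S) (T : Set S) {ε : ℝ} (hε : 0 < ε) :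
    ∃ β₀ : ℝ, 0 ≤ β₀ ∧ β₀ < 1 ∧ ∀ β : ℝ, β₀ < β → β < 1 →
      Pr M σ s T - PrD M σ s T β ≤ ε := by
  have h1 : Pr M σ s T - ε/2 < ⨆ n : ℕ, reachN M σ T n (s, []) := by
    have : Pr M σ s T - ε/2 < Pr M σ s T := by linarith
    exact this
  obtain ⟨n, hn⟩ := exists_lt_of_lt_ciSup h1
  refine ⟨max (1 - ε/(2*(n+1))) 0, le_max_right _ _, ?_, ?_⟩
  · apply max_lt _ one_pos
    have : (0:ℝ) < ε/(2*(n+1)) := by positivity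
    linarith
  · intro β hβ₀ hβ1
    have hβ0 : 0 ≤ β := le_of_lt (lt_of_le_of_lt (le_max_right _ _) hβ₀)
    have hβl : 1 - ε/(2*(n+1)) < β := lt_of_le_of_lt (le_max_left _ _) hβ₀
    have hpow : 1 - ε/2 ≤ β ^ n := by
      have hb2 : (-2:ℝ) ≤ β - 1 := by linarith
      have := one_add_mul_le_pow hb2 n
      have hnn : (0:ℝ) < (n:ℝ) + 1 := by positivity
      have h2 : -(ε/(2*(n+1))) < β - 1 := by linarith
      have h3 : (n:ℝ) * (β - 1) ≥ (n:ℝ) * (-(ε/(2*(n+1)))) := by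
        apply mul_le_mul_of_nonneg_left (le_of_lt h2) (Nat.cast_nonneg n)
      have h4 : (n:ℝ) * (ε/(2*(n+1))) ≤ ε/2 := by
        rw [mul_div_assoc']
        rw [div_le_div_iff₀ (by positivity) (by norm_num : (0:ℝ) < 2)]
        nlinarith [hε.le, Nat.cast_nonneg (α := ℝ) n]
      have : 1 + (n:ℝ)*(β-1) ≤ (1 + (β-1)) ^ n := this
      simp only [add_sub_cancel] at this
      nlinarith
    have hpow1 : β ^ n ≤ 1 := pow_le_one₀ hβ0 hβ1.le
    have hr0 : 0 ≤ reachN M σ T n ((s,[]) : Hist S A) := reachN_nonneg σ T n _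
    have hr1 : reachN M σ T n ((s,[]) : Hist S A) ≤ 1 := reachN_le_one σ T n _
    have key : reachN M σ T n ((s,[]) : Hist S A) - ε/2 ≤
        β ^ n * reachN M σ T n ((s,[]) : Hist S A) := by nlinarith
    have : β ^ n * reachN M σ T n ((s,[]) : Hist S A) ≤ PrD M σ s T β :=
      le_trans (pow_reachN_le_reachD hβ0 hβ1.le σ T n _) (reachD_le_PrD hβ0 hβ1.le σ s T n)
    linarith

/-- Enabled actions as a finset. -/
noncomputable def enA (M : MDP S A) (t : S) : Finset A :=
  Finset.univ.filter (fun a => M.enabled t a)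

lemma enA_nonempty (M : MDP S A) (t : S) : (enA M t).Nonempty := by
  obtain ⟨a, ha⟩ := M.exists_enabled t
  exact ⟨a, by rw [enA, Finset.mem_filter]; exact ⟨Finset.mem_univ a, ha⟩⟩

lemma mem_enA {t : S} {a : A} : a ∈ enA M t ↔ M.enabled t a := by
  simp [enA]

/-- The MD scheduler induced by a decision map. -/
noncomputable def schedOf (M : MDP S A) (d : S → A) (hd : ∀ t, M.enabled t (d t)) :
    Scheduler M where
  choice π a := if a = d (Hist.last π) then 1 else 0
  nonneg π a := by split <;> norm_num
  sum_one π := by simp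
  supp π a h := by
    rw [if_neg]
    rintro rfl
    exact h (hd _)

lemma schedOf_MD (M : MDP S A) (d : S → A) (hd : ∀ t, M.enabled t (d t)) :
    (schedOf M d hd).MD := by
  constructor
  · intro π π' h
    funext a
    simp only [schedOf, h]
  · intro π a
    by_cases h : a = d (Hist.last π) <;> simp [schedOf, h]

/-- If the last state is absorbing, discounted reachability is an indicator. -/
lemma reachD_absorbing {β : ℝ} (σ : Scheduler M) (T : Set S) :
    ∀ (n : ℕ) (π : Hist S A), M.Absorbing (Hist.last π) →
    reachD M σ T β n π = if Hist.last π ∈ T then 1 else 0 := by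
  intro n
  induction n with
  | zero => intro π _; rw [reachD]
  | succ n ih =>
    intro π h
    by_cases hT : Hist.last π ∈ T
    · rw [reachD, if_pos hT, if_pos hT]
    · rw [reachD, if_neg hT, if_neg hT]
      have hz : ∀ a : A, σ.choice π a * ∑ s', M.P (Hist.last π) a s' *
          reachD M σ T β n (π.1, π.2 ++ [(a, s')]) = 0 := by
        intro a
        by_cases ha : M.enabled (Hist.last π) a
        · have hsum : (∑ s', M.P (Hist.last π) a s' *
              reachD M σ T β n (π.1, π.2 ++ [(a, s')])) = 0 := by
            apply Finset.sum_eq_zero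
            intro s' _
            by_cases hs : s' = Hist.last π
            · rw [hs]
              have hih := ih (π.1, π.2 ++ [(a, Hist.last π)]) (by rw [last_ext]; exact h)
              rw [last_ext] at hih
              rw [hih, if_neg hT, mul_zero]
            · rw [M.P_absorbing_ne h ha hs, zero_mul]
          rw [hsum, mul_zero]
        · rw [σ.supp π a ha, zero_mul]
      rw [Finset.sum_congr rfl (fun a _ => hz a)]
      simp

section Value

variable {m : ℕ}

/-- Terminal weighted reward. -/
noncomputable def rfun (q : Fin m → ℚ) (T : Fin m → Set S) : S → ℝ :=
  fun t => ∑ i, (q i : ℝ) * (if t ∈ T i then 1 else 0)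

/-- Union of all targets. -/
def USet (T : Fin m → Set S) : Set S := ⋃ i, T i

/-- Sum of absolute values of the coefficients. -/
noncomputable def Qc (q : Fin m → ℚ) : ℝ := ∑ i, |(q i : ℝ)|

lemma Qc_nonneg (q : Fin m → ℚ) : 0 ≤ Qc q :=
  Finset.sum_nonneg fun i _ => abs_nonneg _

lemma abs_rfun_le (q : Fin m → ℚ) (T : Fin m → Set S) (t : S) :
    |rfun q T t| ≤ Qc q := by
  refine le_trans (Finset.abs_sum_le_sum_abs _ _) (Finset.sum_le_sum fun i _ => ?_)
  rw [abs_mul]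
  split
  · simp
  · simp [abs_nonneg]

/-- The discounted Bellman operator. -/
noncomputable def Lop (M : MDP S A) (q : Fin m → ℚ) (T : Fin m → Set S) (β : ℝ)
    (v : S → ℝ) : S → ℝ :=
  fun t => if t ∈ USet T then rfun q T t
    else β * (enA M t).sup' (enA_nonempty M t) (fun a => ∑ s', M.P t a s' * v s')

lemma abs_sup'_sub_sup'_le {α : Type*} {s : Finset α} (hs : s.Nonempty) (f g : α → ℝ)
    {c : ℝ} (h : ∀ a ∈ s, |f a - g a| ≤ c) :
    |s.sup' hs f - s.sup' hs g| ≤ c := by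
  rw [abs_sub_le_iff]
  constructor
  · rw [sub_le_iff_le_add]
    refine Finset.sup'_le hs f fun a ha => ?_
    have h1 := (abs_sub_le_iff.mp (h a ha)).1
    have h2 := Finset.le_sup' g ha
    linarith
  · rw [sub_le_iff_le_add]
    refine Finset.sup'_le hs g fun a ha => ?_
    have h1 := (abs_sub_le_iff.mp (h a ha)).2
    have h2 := Finset.le_sup' f ha
    linarith

lemma abs_sum_P_mul_le (M : MDP S A) {t : S} {a : A} (ha : M.enabled t a)
    (v w : S → ℝ) {c : ℝ} (h : ∀ s', |v s' - w s'| ≤ c) :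
    |(∑ s', M.P t a s' * v s') - (∑ s', M.P t a s' * w s')| ≤ c := by
  rw [← Finset.sum_sub_distrib]
  refine le_trans (Finset.abs_sum_le_sum_abs _ _) ?_
  calc (∑ s', |M.P t a s' * v s' - M.P t a s' * w s'|)
      = ∑ s', M.P t a s' * |v s' - w s'| := by
        refine Finset.sum_congr rfl fun s' _ => ?_
        rw [← mul_sub, abs_mul, abs_of_nonneg (M.nonneg t a s')]
    _ ≤ ∑ s', M.P t a s' * c :=
        Finset.sum_le_sum fun s' _ => mul_le_mul_of_nonneg_left (h s') (M.nonneg t a s')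
    _ = c := by rw [← Finset.sum_mul, ha, one_mul]

lemma Lop_lipschitz (M : MDP S A) (q : Fin m → ℚ) (T : Fin m → Set S) {β : ℝ}
    (hβ0 : 0 ≤ β) : LipschitzWith (Real.toNNReal β) (Lop M q T β) := by
  rw [lipschitzWith_iff_dist_le_mul]
  intro v w
  have hc : (0:ℝ) ≤ β * dist v w := mul_nonneg hβ0 dist_nonneg
  rw [show ((Real.toNNReal β : NNReal) : ℝ) * dist v w = β * dist v w by
    rw [Real.coe_toNNReal β hβ0]]
  rw [dist_pi_le_iff hc]
  intro t
  by_cases hU : t ∈ USet T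
  · simp [Lop, hU, hc]
  · simp only [Lop, if_neg hU]
    rw [Real.dist_eq, ← mul_sub, abs_mul, abs_of_nonneg hβ0]
    refine mul_le_mul_of_nonneg_left ?_ hβ0
    refine abs_sup'_sub_sup'_le _ _ _ fun a ha => ?_
    exact abs_sum_P_mul_le M (mem_enA.mp ha) v w fun s' => by
      rw [← Real.dist_eq]; exact dist_le_pi_dist v w s'

lemma Lop_contracting (M : MDP S A) (q : Fin m → ℚ) (T : Fin m → Set S) {β : ℝ}
    (hβ0 : 0 ≤ β) (hβ1 : β < 1) : ContractingWith (Real.toNNReal β) (Lop M q T β) :=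
  ⟨by
    rw [← Real.toNNReal_one]
    exact (Real.toNNReal_lt_toNNReal_iff_of_nonneg hβ0).mpr hβ1, Lop_lipschitz M q T hβ0⟩

variable (q : Fin m → ℚ) (T : Fin m → Set S)

lemma v_on_U {β : ℝ} {v : S → ℝ} (hv : Lop M q T β v = v) {t : S} (hU : t ∈ USet T) :
    v t = rfun q T t := by
  conv_lhs => rw [← hv]
  rw [Lop, if_pos hU]

lemma v_off_U {β : ℝ} {v : S → ℝ} (hv : Lop M q T β v = v) {t : S} (hU : t ∉ USet T) :
    v t = β * (enA M t).sup' (enA_nonempty M t) (fun a => ∑ s', M.P t a s' * v s') := by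
  conv_lhs => rw [← hv]
  rw [Lop, if_neg hU]

lemma abs_v_le [Nonempty S] {β : ℝ} (hβ0 : 0 ≤ β) (hβ1 : β < 1) {v : S → ℝ}
    (hv : Lop M q T β v = v) (t : S) : |v t| ≤ Qc q := by
  have hne : (Finset.univ : Finset S).Nonempty := Finset.univ_nonempty
  obtain ⟨t₀, _, ht₀⟩ := Finset.exists_mem_eq_sup' hne (fun t => |v t|)
  have hle : ∀ u : S, |v u| ≤ Finset.univ.sup' hne (fun t => |v t|) :=
    fun u => Finset.le_sup' (fun t => |v t|) (Finset.mem_univ u)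
  generalize hMx : Finset.univ.sup' hne (fun t => |v t|) = Mx at *
  have hMx0 : 0 ≤ Mx := le_trans (abs_nonneg _) (hle t)
  have hMxQ : Mx ≤ Qc q := by
    by_cases hU : t₀ ∈ USet T
    · rw [ht₀, v_on_U q T hv hU]
      exact abs_rfun_le q T t₀
    · have h1 : |v t₀| ≤ β * Mx := by
        rw [v_off_U q T hv hU, abs_mul, abs_of_nonneg hβ0]
        refine mul_le_mul_of_nonneg_left ?_ hβ0
        rw [abs_le]
        constructor
        · obtain ⟨a, ha⟩ := enA_nonempty M t₀
          refine le_trans ?_ (Finset.le_sup' _ ha)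
          have : |(∑ s', M.P t₀ a s' * v s') - (∑ s', M.P t₀ a s' * 0)| ≤ Mx :=
            abs_sum_P_mul_le M (mem_enA.mp ha) v 0 fun s' => by simpa using hle s'
          simp only [mul_zero, Finset.sum_const_zero, sub_zero] at this
          linarith [(abs_le.mp this).1]
        · refine Finset.sup'_le _ _ fun a ha => ?_
          have : |(∑ s', M.P t₀ a s' * v s') - (∑ s', M.P t₀ a s' * 0)| ≤ Mx :=
            abs_sum_P_mul_le M (mem_enA.mp ha) v 0 fun s' => by simpa using hle s'
          simp only [mul_zero, Finset.sum_const_zero, sub_zero] at this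
          exact (abs_le.mp this).2
      rw [← ht₀] at h1
      have : Mx ≤ 0 := by nlinarith
      linarith [Qc_nonneg q]
  exact le_trans (hle t) hMxQ

lemma sum_reachD_of_mem_U {β : ℝ} (habs : ∀ t ∈ USet T, M.Absorbing t) (σ : Scheduler M)
    (n : ℕ) (π : Hist S A) (hU : Hist.last π ∈ USet T) :
    (∑ i, (q i : ℝ) * reachD M σ (T i) β n π) = rfun q T (Hist.last π) := by
  refine Finset.sum_congr rfl fun i _ => ?_
  rw [reachD_absorbing σ (T i) n π (habs _ hU)]

lemma triple_swap (f : Fin m → ℝ) (β : ℝ) (g : A → ℝ) (p : A → S → ℝ)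
    (x : Fin m → A → S → ℝ) :
    ∑ i, f i * (β * ∑ a, g a * ∑ s', p a s' * x i a s')
    = β * ∑ a, g a * ∑ s', p a s' * (∑ i, f i * x i a s') := by
  simp only [Finset.mul_sum]
  rw [Finset.sum_comm]
  refine Finset.sum_congr rfl fun a _ => ?_
  rw [Finset.sum_comm]
  refine Finset.sum_congr rfl fun s' _ => Finset.sum_congr rfl fun i _ => by ring

lemma not_mem_T_of_not_mem_U {T : Fin m → Set S} {t : S} (hU : t ∉ USet T) (i : Fin m) :
    t ∉ T i := fun hi => hU (Set.mem_iUnion.mpr ⟨i, hi⟩)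

lemma sum_reachD_le_v [Nonempty S] {β : ℝ} (hβ0 : 0 < β) (hβ1 : β < 1)
    {v : S → ℝ} (hv : Lop M q T β v = v)
    (habs : ∀ t ∈ USet T, M.Absorbing t) (σ : Scheduler M) :
    ∀ (n : ℕ) (π : Hist S A),
      (∑ i, (q i : ℝ) * reachD M σ (T i) β n π) ≤ v (Hist.last π) + β ^ n * Qc q := by
  have hvQ : ∀ t, |v t| ≤ Qc q := abs_v_le q T hβ0.le hβ1 hv
  intro n
  induction n with
  | zero =>
    intro π
    by_cases hU : Hist.last π ∈ USet T
    · rw [sum_reachD_of_mem_U q T habs σ 0 π hU, ← v_on_U q T hv hU]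
      have := Qc_nonneg q
      nlinarith
    · have hz : ∀ i : Fin m, reachD M σ (T i) β 0 π = 0 := fun i => by
        rw [reachD, if_neg (not_mem_T_of_not_mem_U hU i)]
      rw [Finset.sum_congr rfl fun i _ => by rw [hz i, mul_zero]]
      rw [Finset.sum_const_zero]
      have := (abs_le.mp (hvQ (Hist.last π))).1
      simp only [pow_zero, one_mul]
      linarith
  | succ n ih =>
    intro π
    by_cases hU : Hist.last π ∈ USet T
    · rw [sum_reachD_of_mem_U q T habs σ (n+1) π hU, ← v_on_U q T hv hU]
      have h1 := Qc_nonneg q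
      have h2 : (0:ℝ) ≤ β ^ (n+1) := by positivity
      nlinarith
    · have hre : (∑ i, (q i : ℝ) * reachD M σ (T i) β (n+1) π)
          = β * ∑ a, σ.choice π a * ∑ s', M.P (Hist.last π) a s' *
              (∑ i, (q i : ℝ) * reachD M σ (T i) β n (π.1, π.2 ++ [(a, s')])) := by
        rw [← triple_swap]
        refine Finset.sum_congr rfl fun i _ => ?_
        rw [reachD, if_neg (not_mem_T_of_not_mem_U hU i)]
      rw [hre]
      set G := (enA M (Hist.last π)).sup' (enA_nonempty M (Hist.last π))
        (fun a => ∑ s', M.P (Hist.last π) a s' * v s') with hG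
      have key : ∀ a : A, σ.choice π a * (∑ s', M.P (Hist.last π) a s' *
            (∑ i, (q i : ℝ) * reachD M σ (T i) β n (π.1, π.2 ++ [(a, s')])))
          ≤ σ.choice π a * (G + β ^ n * Qc q) := by
        intro a
        by_cases ha : M.enabled (Hist.last π) a
        · refine mul_le_mul_of_nonneg_left ?_ (σ.nonneg _ _)
          calc (∑ s', M.P (Hist.last π) a s' *
                (∑ i, (q i : ℝ) * reachD M σ (T i) β n (π.1, π.2 ++ [(a, s')])))
              ≤ ∑ s', M.P (Hist.last π) a s' * (v s' + β ^ n * Qc q) := by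
                refine Finset.sum_le_sum fun s' _ => ?_
                refine mul_le_mul_of_nonneg_left ?_ (M.nonneg _ _ _)
                have := ih (π.1, π.2 ++ [(a, s')])
                rwa [last_ext] at this
            _ = (∑ s', M.P (Hist.last π) a s' * v s')
                + (∑ s', M.P (Hist.last π) a s') * (β ^ n * Qc q) := by
                rw [Finset.sum_mul]
                rw [← Finset.sum_add_distrib]
                refine Finset.sum_congr rfl fun s' _ => by ring
            _ ≤ G + β ^ n * Qc q := by
                have h1 : (∑ s', M.P (Hist.last π) a s' * v s') ≤ G :=
                  Finset.le_sup' (fun a => ∑ s', M.P (Hist.last π) a s' * v s')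
                    (mem_enA.mpr ha)
                rw [ha, one_mul]
                linarith
        · rw [σ.supp π a ha, zero_mul, zero_mul]
      calc β * ∑ a, σ.choice π a * ∑ s', M.P (Hist.last π) a s' *
            (∑ i, (q i : ℝ) * reachD M σ (T i) β n (π.1, π.2 ++ [(a, s')]))
          ≤ β * ∑ a, σ.choice π a * (G + β ^ n * Qc q) :=
            mul_le_mul_of_nonneg_left (Finset.sum_le_sum fun a _ => key a) hβ0.le
        _ = β * (G + β ^ n * Qc q) := by
            rw [← Finset.sum_mul, σ.sum_one, one_mul]
        _ = v (Hist.last π) + β ^ (n+1) * Qc q := by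
            rw [v_off_U q T hv hU, ← hG]
            ring

lemma sum_reachD_ge_v [Nonempty S] {β : ℝ} (hβ0 : 0 < β) (hβ1 : β < 1)
    {v : S → ℝ} (hv : Lop M q T β v = v)
    (habs : ∀ t ∈ USet T, M.Absorbing t)
    {d : S → A} (hd : ∀ t, M.enabled t (d t))
    (hdopt : ∀ t, (enA M t).sup' (enA_nonempty M t)
        (fun a => ∑ s', M.P t a s' * v s') = ∑ s', M.P t (d t) s' * v s') :
    ∀ (n : ℕ) (π : Hist S A),
      v (Hist.last π) - β ^ n * Qc q ≤
        (∑ i, (q i : ℝ) * reachD M (schedOf M d hd) (T i) β n π) := by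
  have hvQ : ∀ t, |v t| ≤ Qc q := abs_v_le q T hβ0.le hβ1 hv
  set σ := schedOf M d hd with hσ
  intro n
  induction n with
  | zero =>
    intro π
    by_cases hU : Hist.last π ∈ USet T
    · rw [sum_reachD_of_mem_U q T habs σ 0 π hU, ← v_on_U q T hv hU]
      have := Qc_nonneg q
      nlinarith
    · have hz : ∀ i : Fin m, reachD M σ (T i) β 0 π = 0 := fun i => by
        rw [reachD, if_neg (not_mem_T_of_not_mem_U hU i)]
      rw [Finset.sum_congr rfl fun i _ => by rw [hz i, mul_zero]]
      rw [Finset.sum_const_zero]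
      have := (abs_le.mp (hvQ (Hist.last π))).2
      simp only [pow_zero, one_mul]
      linarith
  | succ n ih =>
    intro π
    by_cases hU : Hist.last π ∈ USet T
    · rw [sum_reachD_of_mem_U q T habs σ (n+1) π hU, ← v_on_U q T hv hU]
      have h1 := Qc_nonneg q
      have h2 : (0:ℝ) ≤ β ^ (n+1) := by positivity
      nlinarith
    · have hre : (∑ i, (q i : ℝ) * reachD M σ (T i) β (n+1) π)
          = β * ∑ a, σ.choice π a * ∑ s', M.P (Hist.last π) a s' *
              (∑ i, (q i : ℝ) * reachD M σ (T i) β n (π.1, π.2 ++ [(a, s')])) := by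
        rw [← triple_swap]
        refine Finset.sum_congr rfl fun i _ => ?_
        rw [reachD, if_neg (not_mem_T_of_not_mem_U hU i)]
      rw [hre]
      have hcollapse : (∑ a, σ.choice π a * ∑ s', M.P (Hist.last π) a s' *
            (∑ i, (q i : ℝ) * reachD M σ (T i) β n (π.1, π.2 ++ [(a, s')])))
          = ∑ s', M.P (Hist.last π) (d (Hist.last π)) s' *
            (∑ i, (q i : ℝ) * reachD M σ (T i) β n (π.1, π.2 ++ [(d (Hist.last π), s')])) := by
        rw [Finset.sum_eq_single (d (Hist.last π))]
        · simp [hσ, schedOf]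
        · intro a _ hne
          have : σ.choice π a = 0 := by simp [hσ, schedOf, hne]
          rw [this, zero_mul]
        · intro h; exact absurd (Finset.mem_univ _) h
      rw [hcollapse]
      have hstep : (∑ s', M.P (Hist.last π) (d (Hist.last π)) s' * (v s' - β ^ n * Qc q))
          ≤ ∑ s', M.P (Hist.last π) (d (Hist.last π)) s' *
            (∑ i, (q i : ℝ) * reachD M σ (T i) β n (π.1, π.2 ++ [(d (Hist.last π), s')])) := by
        refine Finset.sum_le_sum fun s' _ => ?_
        refine mul_le_mul_of_nonneg_left ?_ (M.nonneg _ _ _)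
        have := ih (π.1, π.2 ++ [(d (Hist.last π), s')])
        rwa [last_ext] at this
      have hexp : (∑ s', M.P (Hist.last π) (d (Hist.last π)) s' * (v s' - β ^ n * Qc q))
          = (∑ s', M.P (Hist.last π) (d (Hist.last π)) s' * v s') - β ^ n * Qc q := by
        have hen : (∑ s', M.P (Hist.last π) (d (Hist.last π)) s') = 1 := hd (Hist.last π)
        rw [Finset.sum_congr rfl fun s' (_ : s' ∈ Finset.univ) =>
          (by ring : M.P (Hist.last π) (d (Hist.last π)) s' * (v s' - β ^ n * Qc q)
            = M.P (Hist.last π) (d (Hist.last π)) s' * v s'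
              - M.P (Hist.last π) (d (Hist.last π)) s' * (β ^ n * Qc q))]
        rw [Finset.sum_sub_distrib, ← Finset.sum_mul, hen, one_mul]
      have hval : v (Hist.last π) = β * (∑ s', M.P (Hist.last π) (d (Hist.last π)) s' * v s') := by
        rw [v_off_U q T hv hU, hdopt]
      calc v (Hist.last π) - β ^ (n+1) * Qc q
          = β * ((∑ s', M.P (Hist.last π) (d (Hist.last π)) s' * v s') - β ^ n * Qc q) := by
            rw [hval]; ring
        _ ≤ β * ∑ s', M.P (Hist.last π) (d (Hist.last π)) s' *
            (∑ i, (q i : ℝ) * reachD M σ (T i) β n (π.1, π.2 ++ [(d (Hist.last π), s')])) := by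
            refine mul_le_mul_of_nonneg_left ?_ hβ0.le
            rw [← hexp]
            exact hstep

end Value

section Master

variable {m : ℕ}

lemma sum_q_le (q : Fin m → ℚ) (x y : Fin m → ℝ) {e : ℝ}
    (h : ∀ i, |x i - y i| ≤ e) :
    (∑ i, (q i : ℝ) * x i) ≤ (∑ i, (q i : ℝ) * y i) + Qc q * e := by
  have h1 : (∑ i, (q i:ℝ) * x i) - (∑ i, (q i:ℝ) * y i) = ∑ i, (q i:ℝ) * (x i - y i) := by
    rw [← Finset.sum_sub_distrib]
    exact Finset.sum_congr rfl fun i _ => by ring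
  have h2 : (∑ i, (q i:ℝ) * (x i - y i)) ≤ Qc q * e := by
    calc (∑ i, (q i:ℝ) * (x i - y i)) ≤ ∑ i, |(q i:ℝ) * (x i - y i)| :=
          Finset.sum_le_sum fun i _ => le_abs_self _
      _ = ∑ i, |(q i:ℝ)| * |x i - y i| := by
          refine Finset.sum_congr rfl fun i _ => abs_mul _ _
      _ ≤ ∑ i, |(q i:ℝ)| * e :=
          Finset.sum_le_sum fun i _ => mul_le_mul_of_nonneg_left (h i) (abs_nonneg _)
      _ = Qc q * e := by rw [Qc, ← Finset.sum_mul]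
  linarith

lemma PrD_close_all (hm : 1 ≤ m) (σ : Scheduler M) (s : S) (T : Fin m → Set S) {ε : ℝ}
    (hε : 0 < ε) :
    ∃ β₀ : ℝ, 0 ≤ β₀ ∧ β₀ < 1 ∧ ∀ β : ℝ, β₀ < β → β < 1 → ∀ i,
      Pr M σ s (T i) - PrD M σ s (T i) β ≤ ε := by
  choose f h0 h1 h2 using fun i : Fin m => Pr_sub_PrD_le σ s (T i) hε
  have hne : (Finset.univ : Finset (Fin m)).Nonempty := ⟨⟨0, hm⟩, Finset.mem_univ _⟩
  refine ⟨Finset.univ.sup' hne f, ?_, ?_, ?_⟩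
  · obtain ⟨i, hi⟩ := hne
    exact le_trans (h0 i) (Finset.le_sup' f hi)
  · rw [Finset.sup'_lt_iff]
    exact fun i _ => h1 i
  · intro β hβ hβ1 i
    exact h2 i β (lt_of_le_of_lt (Finset.le_sup' f (Finset.mem_univ i)) hβ) hβ1

lemma exists_MD_opt [Nonempty S] [Nonempty A] (M : MDP S A) (hm : 1 ≤ m) (s : S)
    (q : Fin m → ℚ) (T : Fin m → Set S) (habs : ∀ t ∈ USet T, M.Absorbing t) :
    ∃ σmax : Scheduler M, σmax.MD ∧ ∀ σ : Scheduler M,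
      (∑ i, (q i : ℝ) * Pr M σ s (T i)) ≤ ∑ i, (q i : ℝ) * Pr M σmax s (T i) := by
  classical
  let DD : Finset (S → A) := Finset.univ.filter (fun d => ∀ t, M.enabled t (d t))
  have hDD : DD.Nonempty := by
    refine ⟨fun t => (M.exists_enabled t).choose, ?_⟩
    simp only [DD, Finset.mem_filter, Finset.mem_univ, true_and]
    exact fun t => (M.exists_enabled t).choose_spec
  let Fval : (S → A) → ℝ := fun d =>
    if h : ∀ t, M.enabled t (d t) then ∑ i, (q i : ℝ) * Pr M (schedOf M d h) s (T i) else 0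
  obtain ⟨dmax, hdmaxDD, hdmax⟩ := Finset.exists_max_image DD Fval hDD
  have hdmaxen : ∀ t, M.enabled t (dmax t) :=
    (Finset.mem_filter.mp hdmaxDD).2
  refine ⟨schedOf M dmax hdmaxen, schedOf_MD M dmax hdmaxen, ?_⟩
  intro σ
  have hQ0 := Qc_nonneg q
  have hQ1 : (0:ℝ) < Qc q + 1 := by linarith
  suffices hsuf : ∀ ε : ℝ, 0 < ε →
      (∑ i, (q i : ℝ) * Pr M σ s (T i)) ≤
        (∑ i, (q i : ℝ) * Pr M (schedOf M dmax hdmaxen) s (T i)) + ε by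
    by_contra hc
    push_neg at hc
    have := hsuf ((∑ i, (q i : ℝ) * Pr M σ s (T i) -
      ∑ i, (q i : ℝ) * Pr M (schedOf M dmax hdmaxen) s (T i)) / 2) (by linarith)
    linarith
  intro ε hε
  set ε' := ε / (6 * (Qc q + 1)) with hε'def
  have hε' : 0 < ε' := by positivity
  obtain ⟨βσ, hβσ0, hβσ1, hβσ⟩ := PrD_close_all hm σ s T hε'
  have hall : ∀ d : S → A, ∃ β₀ : ℝ, 0 ≤ β₀ ∧ β₀ < 1 ∧
      ∀ h : ∀ t, M.enabled t (d t), ∀ β : ℝ, β₀ < β → β < 1 → ∀ i,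
        Pr M (schedOf M d h) s (T i) - PrD M (schedOf M d h) s (T i) β ≤ ε' := by
    intro d
    by_cases h : ∀ t, M.enabled t (d t)
    · obtain ⟨β₀, h0, h1, h2⟩ := PrD_close_all hm (schedOf M d h) s T hε'
      exact ⟨β₀, h0, h1, fun _ β hβ hβ1 i => h2 β hβ hβ1 i⟩
    · exact ⟨0, le_refl 0, one_pos, fun h' => absurd h' h⟩
  choose βf hβf0 hβf1 hβf using hall
  have hneSA : (Finset.univ : Finset (S → A)).Nonempty := Finset.univ_nonempty
  set β₀ := max βσ (Finset.univ.sup' hneSA βf) with hβ₀def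
  have hβ₀0 : 0 ≤ β₀ := le_trans hβσ0 (le_max_left _ _)
  have hβ₀1 : β₀ < 1 := by
    apply max_lt hβσ1
    rw [Finset.sup'_lt_iff]
    exact fun d _ => hβf1 d
  set β := (β₀ + 1) / 2 with hβdef
  have hββ₀ : β₀ < β := by rw [hβdef]; linarith
  have hβ1 : β < 1 := by rw [hβdef]; linarith
  have hβpos : 0 < β := by rw [hβdef]; linarith
  have hβσβ : βσ < β := lt_of_le_of_lt (le_max_left _ _) hββ₀
  -- fixed point of the discounted Bellman operator
  have hcon := Lop_contracting M q T hβpos.le hβ1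
  set v := ContractingWith.fixedPoint (Lop M q T β) hcon with hvdef
  have hv : Lop M q T β v = v := hcon.fixedPoint_isFixedPt
  -- greedy decision map
  have hgr : ∀ t : S, ∃ a : A, M.enabled t a ∧
      (enA M t).sup' (enA_nonempty M t) (fun a => ∑ s', M.P t a s' * v s')
        = ∑ s', M.P t a s' * v s' := by
    intro t
    obtain ⟨a, ha, hval⟩ := Finset.exists_mem_eq_sup' (enA_nonempty M t)
      (fun a => ∑ s', M.P t a s' * v s')
    exact ⟨a, mem_enA.mp ha, hval⟩
  choose dgr hdgren hdgropt using hgr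
  set σgr := schedOf M dgr hdgren with hσgrdef
  have hβgrβ : βf dgr < β :=
    lt_of_le_of_lt (le_trans (Finset.le_sup' βf (Finset.mem_univ dgr)) (le_max_right _ _)) hββ₀
  -- choose a horizon n
  obtain ⟨n₁, hn₁⟩ := exists_pow_lt_of_lt_one
    (show (0:ℝ) < ε' / (Qc q + 1) by positivity) hβ1
  have hsup2 : ∀ i : Fin m, ∃ k : ℕ,
      PrD M σ s (T i) β - ε' < reachD M σ (T i) β k ((s,[]) : Hist S A) := by
    intro i
    have h : PrD M σ s (T i) β - ε' < ⨆ k : ℕ, reachD M σ (T i) β k ((s,[]) : Hist S A) := by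
      have : PrD M σ s (T i) β - ε' < PrD M σ s (T i) β := by linarith
      exact this
    exact exists_lt_of_lt_ciSup h
  have hsup3 : ∀ i : Fin m, ∃ k : ℕ,
      PrD M σgr s (T i) β - ε' < reachD M σgr (T i) β k ((s,[]) : Hist S A) := by
    intro i
    have h : PrD M σgr s (T i) β - ε' < ⨆ k : ℕ, reachD M σgr (T i) β k ((s,[]) : Hist S A) := by
      have : PrD M σgr s (T i) β - ε' < PrD M σgr s (T i) β := by linarith
      exact this
    exact exists_lt_of_lt_ciSup h
  choose f2 hf2 using hsup2
  choose f3 hf3 using hsup3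
  set n := max n₁ (max (Finset.univ.sup f2) (Finset.univ.sup f3)) with hndef
  have hβn : β ^ n * Qc q ≤ ε' := by
    have h1 : β ^ n ≤ β ^ n₁ :=
      pow_le_pow_of_le_one hβpos.le hβ1.le (le_max_left _ _)
    have h2 : β ^ n₁ < ε' / (Qc q + 1) := hn₁
    have h3 : 0 ≤ β ^ n := pow_nonneg hβpos.le n
    calc β ^ n * Qc q ≤ (ε' / (Qc q + 1)) * Qc q := by nlinarith
      _ ≤ ε' := by
          rw [div_mul_eq_mul_div, div_le_iff₀ hQ1]
          nlinarith
  -- closeness facts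
  have hclose_σ : ∀ i, |Pr M σ s (T i) - PrD M σ s (T i) β| ≤ ε' := by
    intro i
    rw [abs_le]
    constructor
    · have := PrD_le_Pr hβpos.le hβ1.le σ s (T i)
      linarith
    · exact hβσ β hβσβ hβ1 i
  have hclose_gr : ∀ i, |Pr M σgr s (T i) - PrD M σgr s (T i) β| ≤ ε' := by
    intro i
    rw [abs_le]
    constructor
    · have := PrD_le_Pr hβpos.le hβ1.le σgr s (T i)
      linarith
    · exact hβf dgr hdgren β hβgrβ hβ1 i
  have hreach_σ : ∀ i, |PrD M σ s (T i) β - reachD M σ (T i) β n ((s,[]) : Hist S A)| ≤ ε' := by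
    intro i
    rw [abs_le]
    constructor
    · have := reachD_le_PrD hβpos.le hβ1.le σ s (T i) n
      linarith
    · have h1 : f2 i ≤ n :=
        le_trans (le_trans (Finset.le_sup (Finset.mem_univ i)) (le_max_left _ _))
          (le_max_right _ _)
      have h2 := reachD_mono_le hβpos.le σ (T i) h1 ((s,[]) : Hist S A)
      have := hf2 i
      linarith
  have hreach_gr : ∀ i, |PrD M σgr s (T i) β - reachD M σgr (T i) β n ((s,[]) : Hist S A)| ≤ ε' := by
    intro i
    rw [abs_le]
    constructor
    · have := reachD_le_PrD hβpos.le hβ1.le σgr s (T i) n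
      linarith
    · have h1 : f3 i ≤ n :=
        le_trans (le_trans (Finset.le_sup (Finset.mem_univ i)) (le_max_right _ _))
          (le_max_right _ _)
      have h2 := reachD_mono_le hβpos.le σgr (T i) h1 ((s,[]) : Hist S A)
      have := hf3 i
      linarith
  -- the chain of inequalities
  have c1 : (∑ i, (q i : ℝ) * Pr M σ s (T i))
      ≤ (∑ i, (q i : ℝ) * PrD M σ s (T i) β) + Qc q * ε' :=
    sum_q_le q _ _ hclose_σ
  have c2 : (∑ i, (q i : ℝ) * PrD M σ s (T i) β)
      ≤ (∑ i, (q i : ℝ) * reachD M σ (T i) β n ((s,[]) : Hist S A)) + Qc q * ε' :=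
    sum_q_le q _ _ hreach_σ
  have c3 : (∑ i, (q i : ℝ) * reachD M σ (T i) β n ((s,[]) : Hist S A)) ≤ v s + ε' := by
    have := sum_reachD_le_v q T hβpos hβ1 hv habs σ n ((s,[]) : Hist S A)
    rw [last_nil] at this
    linarith
  have c4 : v s - ε' ≤ (∑ i, (q i : ℝ) * reachD M σgr (T i) β n ((s,[]) : Hist S A)) := by
    have := sum_reachD_ge_v q T hβpos hβ1 hv habs hdgren hdgropt n ((s,[]) : Hist S A)
    rw [last_nil] at this
    linarith
  have c5 : (∑ i, (q i : ℝ) * reachD M σgr (T i) β n ((s,[]) : Hist S A))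
      ≤ (∑ i, (q i : ℝ) * PrD M σgr s (T i) β) + Qc q * ε' := by
    refine sum_q_le q _ _ fun i => ?_
    rw [abs_sub_comm]
    exact hreach_gr i
  have c6 : (∑ i, (q i : ℝ) * PrD M σgr s (T i) β)
      ≤ (∑ i, (q i : ℝ) * Pr M σgr s (T i)) + Qc q * ε' := by
    refine sum_q_le q _ _ fun i => ?_
    rw [abs_sub_comm]
    exact hclose_gr i
  have c7 : (∑ i, (q i : ℝ) * Pr M σgr s (T i))
      ≤ ∑ i, (q i : ℝ) * Pr M (schedOf M dmax hdmaxen) s (T i) := by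
    have hgrDD : dgr ∈ DD := by
      simp only [DD, Finset.mem_filter, Finset.mem_univ, true_and]
      exact hdgren
    have h1 : Fval dgr = ∑ i, (q i : ℝ) * Pr M σgr s (T i) := by
      simp only [Fval]
      rw [dif_pos hdgren]
    have h2 : Fval dmax = ∑ i, (q i : ℝ) * Pr M (schedOf M dmax hdmaxen) s (T i) := by
      simp only [Fval]
      rw [dif_pos hdmaxen]
    have := hdmax dgr hgrDD
    rw [h1, h2] at this
    exact this
  have hfinal : (4 * Qc q + 2) * ε' ≤ ε := by
    rw [hε'def, mul_div_assoc']
    rw [div_le_iff₀ (by positivity : (0:ℝ) < 6 * (Qc q + 1))]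
    nlinarith
  linarith

end Master

end Aux


/-- For a single scheduler quantifier, a single initial state `s`, and
absorbing target sets `T₁, …, T_m`, MD schedulers suffice for inequalities (`≥`, `>`)
and for disequalities (`|·| > ε`). -/
theorem MD_suffice_absorbing_targets
    {S A : Type*} [Fintype S] [Fintype A] [Nonempty S] [Nonempty A]
    (M : MDP S A) {m : ℕ} (hm : 1 ≤ m) (s : S)
    (q : Fin m → ℚ) (qf : ℚ) (T : Fin m → Set S)
    (habs : ∀ i, ∀ t ∈ T i, M.Absorbing t) :
    ((∃ σ : Scheduler M,
        (∑ i, (q i : ℝ) * Pr M σ s (T i)) ≥ (qf : ℝ)) ↔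
      (∃ σ : Scheduler M, σ.MD ∧
        (∑ i, (q i : ℝ) * Pr M σ s (T i)) ≥ (qf : ℝ))) ∧
    ((∃ σ : Scheduler M,
        (∑ i, (q i : ℝ) * Pr M σ s (T i)) > (qf : ℝ)) ↔
      (∃ σ : Scheduler M, σ.MD ∧
        (∑ i, (q i : ℝ) * Pr M σ s (T i)) > (qf : ℝ))) ∧
    (∀ ε : ℝ, 0 ≤ ε →
      ((∃ σ : Scheduler M,
          |(∑ i, (q i : ℝ) * Pr M σ s (T i)) - (qf : ℝ)| > ε) ↔
        (∃ σ : Scheduler M, σ.MD ∧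
          |(∑ i, (q i : ℝ) * Pr M σ s (T i)) - (qf : ℝ)| > ε))) := by
  have habs' : ∀ t ∈ USet T, M.Absorbing t := by
    intro t ht
    obtain ⟨i, hi⟩ := Set.mem_iUnion.mp ht
    exact habs i t hi
  obtain ⟨σmax, hmaxMD, hmax⟩ := exists_MD_opt M hm s q T habs'
  obtain ⟨σmin, hminMD, hmin'⟩ := exists_MD_opt M hm s (fun i => -(q i)) T habs'
  have hmin : ∀ σ : Scheduler M,
      (∑ i, (q i : ℝ) * Pr M σmin s (T i)) ≤ ∑ i, (q i : ℝ) * Pr M σ s (T i) := by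
    intro σ
    have h := hmin' σ
    simp only [Rat.cast_neg, neg_mul, Finset.sum_neg_distrib] at h
    linarith
  refine ⟨⟨?_, ?_⟩, ⟨?_, ?_⟩, fun ε hε => ⟨?_, ?_⟩⟩
  · rintro ⟨σ, h⟩
    exact ⟨σmax, hmaxMD, le_trans h (hmax σ)⟩
  · rintro ⟨σ, _, h⟩
    exact ⟨σ, h⟩
  · rintro ⟨σ, h⟩
    exact ⟨σmax, hmaxMD, lt_of_lt_of_le h (hmax σ)⟩
  · rintro ⟨σ, _, h⟩
    exact ⟨σ, h⟩
  · rintro ⟨σ, h⟩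
    rcases lt_abs.mp h with h' | h'
    · refine ⟨σmax, hmaxMD, lt_of_lt_of_le ?_ (le_abs_self _)⟩
      have := hmax σ
      linarith
    · refine ⟨σmin, hminMD, lt_of_lt_of_le ?_ (neg_le_abs _)⟩
      have := hmin σ
      linarith
  · rintro ⟨σ, _, h⟩
    exact ⟨σ, h⟩
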